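/- Consider min{‖X‖₁ : X_{1,1} = 1} over X ∈ ℝ^{2×2} where ‖·‖₁ is the nuclear norm. The unique minimizer is X♮ = E_{1,1}, and strict complementarity holds: 0 ∈ relint(∂‖·‖₁(X♮) − range(A*)). However, the problem is not (μ,r)-sharp around X♮ for any μ>0, r≥0, since ∂‖·‖₁(X♮) − range(A*) is contained in a 2-dimensional subspace of ℝ^{2×2} (the diagonal matrices). -/

import Mathlib

open Pointwise

/-- The nuclear norm of a `2 × 2` real matrix: since `σ₁² + σ₂² = ‖X‖_F²` and
`σ₁σ₂ = |det X|`, we have `σ₁ + σ₂ = √(‖X‖_F² + 2|det X|)`. -/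
noncomputable def nuc2 (X : Matrix (Fin 2) (Fin 2) ℝ) : ℝ :=
  Real.sqrt ((∑ i, ∑ j, (X i j) ^ 2) + 2 * |X.det|)

/-- The matrix `E_{1,1}`. -/
noncomputable def E11 : Matrix (Fin 2) (Fin 2) ℝ := Matrix.single 0 0 1

namespace NucAux

lemma E11_eq : E11 = !![1,0;0,0] := by
  ext i j
  fin_cases i <;> fin_cases j <;> simp [E11, Matrix.single]

lemma nuc2_eq (X : Matrix (Fin 2) (Fin 2) ℝ) :
    nuc2 X = Real.sqrt ((X 0 0)^2 + (X 0 1)^2 + (X 1 0)^2 + (X 1 1)^2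
      + 2 * |X 0 0 * X 1 1 - X 0 1 * X 1 0|) := by
  simp only [nuc2, Fin.sum_univ_two, Matrix.det_fin_two]
  ring_nf

lemma nuc2_E11 : nuc2 E11 = 1 := by
  rw [nuc2_eq, E11_eq]; norm_num

lemma sum_eq (G X : Matrix (Fin 2) (Fin 2) ℝ) :
    ∑ i, ∑ j, G i j * (X i j - E11 i j)
      = G 0 0 * (X 0 0 - 1) + G 0 1 * X 0 1 + G 1 0 * X 1 0 + G 1 1 * X 1 1 := by
  rw [E11_eq]
  simp [Fin.sum_univ_two]
  ring

lemma nuc2_nonneg (X : Matrix (Fin 2) (Fin 2) ℝ) : 0 ≤ nuc2 X := Real.sqrt_nonneg _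

lemma sqrt4 : Real.sqrt 4 = 2 := by
  rw [show (4:ℝ) = 2^2 by norm_num, Real.sqrt_sq]; norm_num

/-- duality bound: for `|α| ≤ 1`, `X₀₀ + α X₁₁ ≤ ‖X‖₁`. -/
lemma dual_bound (α : ℝ) (hα : |α| ≤ 1) (X : Matrix (Fin 2) (Fin 2) ℝ) :
    X 0 0 + α * X 1 1 ≤ nuc2 X := by
  obtain ⟨hα1, hα2⟩ := abs_le.1 hα
  set a := X 0 0; set b := X 0 1; set c := X 1 0; set d := X 1 1
  rw [nuc2_eq]
  apply Real.le_sqrt_of_sq_le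
  have h1 : α * (a * d - b * c) ≤ |a * d - b * c| := by
    calc α * (a * d - b * c) ≤ |α * (a * d - b * c)| := le_abs_self _
    _ = |α| * |a * d - b * c| := abs_mul _ _
    _ ≤ 1 * |a * d - b * c| := mul_le_mul_of_nonneg_right hα (abs_nonneg _)
    _ = |a * d - b * c| := one_mul _
  nlinarith [mul_nonneg (by linarith : (0:ℝ) ≤ 1 - α) (sq_nonneg (b + c)),
    mul_nonneg (by linarith : (0:ℝ) ≤ 1 + α) (sq_nonneg (b - c)),
    mul_nonneg (mul_nonneg (by linarith : (0:ℝ) ≤ 1 - α) (by linarith : (0:ℝ) ≤ 1 + α))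
      (sq_nonneg d)]

/-- Characterization of the subdifferential set. -/
lemma mem_S (G : Matrix (Fin 2) (Fin 2) ℝ) :
    (∀ X : Matrix (Fin 2) (Fin 2) ℝ,
        nuc2 X ≥ nuc2 E11 + ∑ i, ∑ j, G i j * (X i j - E11 i j)) ↔
      (G 0 0 = 1 ∧ G 0 1 = 0 ∧ G 1 0 = 0 ∧ |G 1 1| ≤ 1) := by
  constructor
  · intro h
    have h' : ∀ X : Matrix (Fin 2) (Fin 2) ℝ,
        1 + (G 0 0 * (X 0 0 - 1) + G 0 1 * X 0 1 + G 1 0 * X 1 0 + G 1 1 * X 1 1)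
          ≤ nuc2 X := by
      intro X
      have := h X
      rwa [nuc2_E11, sum_eq] at this
    have h00 : G 0 0 = 1 := by
      have h1 := h' !![0,0;0,0]
      have h2 := h' !![2,0;0,0]
      rw [nuc2_eq] at h1 h2
      norm_num at h1 h2
      linarith
    have key : ∀ t : ℝ, (∀ s : ℝ, 1 + s * t ≤ Real.sqrt (1 + s ^ 2)) → t = 0 := by
      intro t ht
      have h1 := ht t
      have h2 : Real.sqrt (1 + t ^ 2) ≤ 1 + t ^ 2 / 2 := by
        rw [show (1:ℝ) + t ^ 2 / 2 = Real.sqrt ((1 + t ^ 2 / 2) ^ 2) from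
          (Real.sqrt_sq (by positivity)).symm]
        exact Real.sqrt_le_sqrt (by nlinarith)
      have h3 : t ^ 2 = 0 := by nlinarith
      exact pow_eq_zero_iff two_ne_zero |>.mp h3
    have h01 : G 0 1 = 0 := by
      apply key
      intro s
      have := h' !![1, s; 0, 0]
      rw [nuc2_eq] at this
      norm_num at this
      calc 1 + s * G 0 1 = 1 + (G 0 1 * s) := by ring
      _ ≤ _ := by convert this using 2
    have h10 : G 1 0 = 0 := by
      apply key
      intro s
      have := h' !![1, 0; s, 0]
      rw [nuc2_eq] at this
      norm_num at this
      calc 1 + s * G 1 0 = 1 + (G 1 0 * s) := by ring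
      _ ≤ _ := by convert this using 2
    have h11 : |G 1 1| ≤ 1 := by
      have h1 := h' !![1, 0; 0, 1]
      have h2 := h' !![1, 0; 0, -1]
      rw [nuc2_eq] at h1 h2
      norm_num at h1 h2
      rw [abs_le]
      constructor <;> linarith
    exact ⟨h00, h01, h10, h11⟩
  · rintro ⟨h00, h01, h10, h11⟩ X
    have := dual_bound (G 1 1) h11 X
    rw [nuc2_E11, sum_eq, h00, h01, h10]
    linarith

def W : Submodule ℝ (Matrix (Fin 2) (Fin 2) ℝ) where
  carrier := {G | G 0 1 = 0 ∧ G 1 0 = 0}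
  add_mem' := fun ha hb =>
    ⟨by simp [Matrix.add_apply, ha.1, hb.1], by simp [Matrix.add_apply, ha.2, hb.2]⟩
  zero_mem' := ⟨rfl, rfl⟩
  smul_mem' := fun c x hx =>
    ⟨by simp [Matrix.smul_apply, hx.1], by simp [Matrix.smul_apply, hx.2]⟩

end NucAux

theorem nuclear_norm_strict_comp_not_sharp :
    (∀ X : Matrix (Fin 2) (Fin 2) ℝ, X 0 0 = 1 → nuc2 E11 ≤ nuc2 X) ∧
    (∀ X : Matrix (Fin 2) (Fin 2) ℝ, X 0 0 = 1 → nuc2 X = nuc2 E11 → X = E11) ∧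
    ((0 : Matrix (Fin 2) (Fin 2) ℝ) ∈ intrinsicInterior ℝ
      ({G : Matrix (Fin 2) (Fin 2) ℝ |
          ∀ X : Matrix (Fin 2) (Fin 2) ℝ,
            nuc2 X ≥ nuc2 E11 + ∑ i, ∑ j, G i j * (X i j - E11 i j)}
        - Set.range (fun β : ℝ => β • E11))) ∧
    (({G : Matrix (Fin 2) (Fin 2) ℝ |
          ∀ X : Matrix (Fin 2) (Fin 2) ℝ,
            nuc2 X ≥ nuc2 E11 + ∑ i, ∑ j, G i j * (X i j - E11 i j)}
        - Set.range (fun β : ℝ => β • E11))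
      ⊆ {G : Matrix (Fin 2) (Fin 2) ℝ | G 0 1 = 0 ∧ G 1 0 = 0}) ∧
    ¬ ∃ μ > (0 : ℝ), ∃ r ≥ (0 : ℝ), ∀ X : Matrix (Fin 2) (Fin 2) ℝ,
        nuc2 X + r * |X 0 0 - 1| - nuc2 E11 ≥ μ * nuc2 (X - E11) := by
  classical
  set S : Set (Matrix (Fin 2) (Fin 2) ℝ) :=
    {G : Matrix (Fin 2) (Fin 2) ℝ |
      ∀ X : Matrix (Fin 2) (Fin 2) ℝ,
        nuc2 X ≥ nuc2 E11 + ∑ i, ∑ j, G i j * (X i j - E11 i j)} with hS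
  set T : Set (Matrix (Fin 2) (Fin 2) ℝ) := S - Set.range (fun β : ℝ => β • E11) with hT
  -- membership description of T
  have hTmem : ∀ G : Matrix (Fin 2) (Fin 2) ℝ,
      G ∈ T ↔ ∃ H ∈ S, ∃ β : ℝ, H - β • E11 = G := by
    intro G
    rw [hT, Set.mem_sub]
    constructor
    · rintro ⟨H, hH, y, ⟨β, rfl⟩, hEq⟩
      exact ⟨H, hH, β, hEq⟩
    · rintro ⟨H, hH, β, hEq⟩
      exact ⟨H, hH, β • E11, ⟨β, rfl⟩, hEq⟩
  -- conjunct 4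
  have hsub : T ⊆ {G : Matrix (Fin 2) (Fin 2) ℝ | G 0 1 = 0 ∧ G 1 0 = 0} := by
    intro G hG
    obtain ⟨H, hH, β, rfl⟩ := (hTmem G).1 hG
    obtain ⟨-, h01, h10, -⟩ := (NucAux.mem_S H).1 hH
    constructor <;>
      simp [Matrix.sub_apply, Matrix.smul_apply, h01, h10, NucAux.E11_eq]
  have h0T : (0 : Matrix (Fin 2) (Fin 2) ℝ) ∈ T := by
    rw [hTmem]
    refine ⟨E11, ?_, 1, by simp⟩
    rw [hS]
    refine (NucAux.mem_S E11).2 ?_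
    rw [NucAux.E11_eq]
    norm_num
  refine ⟨?_, ?_, ?_, hsub, ?_⟩
  · -- minimality
    intro X hX
    have := NucAux.dual_bound 0 (by norm_num) X
    rw [NucAux.nuc2_E11]
    simpa [hX] using this
  · -- uniqueness
    intro X hX h
    rw [NucAux.nuc2_E11] at h
    rw [NucAux.nuc2_eq] at h
    have hs := Real.sqrt_eq_one.1 h
    have habs : 0 ≤ |X 0 0 * X 1 1 - X 0 1 * X 1 0| := abs_nonneg _
    have hb : (X 0 1) ^ 2 = 0 := by nlinarith [sq_nonneg (X 1 0), sq_nonneg (X 1 1)]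
    have hc : (X 1 0) ^ 2 = 0 := by nlinarith [sq_nonneg (X 0 1), sq_nonneg (X 1 1)]
    have hd : (X 1 1) ^ 2 = 0 := by nlinarith [sq_nonneg (X 0 1), sq_nonneg (X 1 0)]
    rw [sq_eq_zero_iff] at hb hc hd
    ext i j
    fin_cases i <;> fin_cases j <;>
      simp [NucAux.E11_eq, hX, hb, hc, hd]
  · -- strict complementarity: 0 ∈ intrinsic interior
    have hspan : affineSpan ℝ T ≤ NucAux.W.toAffineSubspace := by
      rw [affineSpan_le]
      intro G hG
      exact (Submodule.mem_toAffineSubspace).2 (hsub hG)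
    refine ⟨⟨0, subset_affineSpan ℝ T h0T⟩, ?_, rfl⟩
    rw [mem_interior]
    refine ⟨{g : affineSpan ℝ T | |(g : Matrix (Fin 2) (Fin 2) ℝ) 1 1| < 1}, ?_, ?_, ?_⟩
    · -- subset of the preimage
      intro g hg
      have hg11 : |(g : Matrix (Fin 2) (Fin 2) ℝ) 1 1| < 1 := hg
      have hgW := (Submodule.mem_toAffineSubspace).1 (hspan g.2)
      obtain ⟨e1, e2⟩ := hgW
      show (g : Matrix (Fin 2) (Fin 2) ℝ) ∈ T
      rw [hTmem]
      refine ⟨!![1, 0; 0, (g : Matrix (Fin 2) (Fin 2) ℝ) 1 1], ?_,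
        1 - (g : Matrix (Fin 2) (Fin 2) ℝ) 0 0, ?_⟩
      · refine (NucAux.mem_S _).2 ?_
        norm_num
        exact hg11.le
      · ext i j
        fin_cases i <;> fin_cases j <;>
          simp [NucAux.E11_eq, Matrix.sub_apply, Matrix.smul_apply, e1, e2]
    · -- openness
      have hc : Continuous fun g : affineSpan ℝ T =>
          |(g : Matrix (Fin 2) (Fin 2) ℝ) 1 1| :=
        continuous_abs.comp ((continuous_apply 1).comp
          ((continuous_apply 1).comp continuous_subtype_val))
      exact isOpen_Iio.preimage hc
    · show |((⟨0, _⟩ : affineSpan ℝ T) : Matrix (Fin 2) (Fin 2) ℝ) 1 1| < 1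
      norm_num
  · -- not sharp
    rintro ⟨μ, hμ, r, hr, h⟩
    have hX := h !![1, μ; 0, 0]
    rw [NucAux.nuc2_E11] at hX
    have e1 : nuc2 !![1, μ; 0, 0] = Real.sqrt (1 + μ ^ 2) := by
      rw [NucAux.nuc2_eq]; norm_num
    have e2 : nuc2 (!![1, μ; 0, 0] - E11) = μ := by
      rw [NucAux.nuc2_eq, NucAux.E11_eq]
      norm_num [Matrix.sub_apply]
      exact Real.sqrt_sq hμ.le
    rw [e1, e2] at hX
    norm_num at hX
    have hlt : Real.sqrt (1 + μ ^ 2) < 1 + μ ^ 2 := by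
      rw [Real.sqrt_lt' (by positivity)]
      nlinarith
    nlinarith
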